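/- arXiv:2506.02778 — 2 statements merged into one kernel-verified Lean document; each statement's English description precedes it below -/
import Mathlib

section
/- For real numbers a, b ≤ 0, t > 0 and k ≥ 1, one has the bound |φ_k(t(a+b)) - k! φ_k(ta) φ_k(tb)| ≤ C t² |a| |b| for a constant C depending only on k (scalar version of the splitting error estimate). -/
open scoped Nat
open MeasureTheory intervalIntegral Metric

noncomputable def Fn (k n : ℕ) (z : ℝ) : ℝ :=
  ∫ ξ in (0:ℝ)..1, (1 - ξ) ^ n * Real.exp ((1 - ξ) * z) * ξ ^ (k - 1) / ((k-1)! : ℝ)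

lemma div_le_div_of_nonneg_right' {a b c : ℝ} (h : a ≤ b) (hc : 0 < c) :
    a / c ≤ b / c := by gcongr

lemma Fn_cont (k n : ℕ) (x : ℝ) :
    Continuous (fun ξ : ℝ => (1 - ξ) ^ n * Real.exp ((1 - ξ) * x) * ξ ^ (k - 1) / ((k-1)! : ℝ)) := by
  fun_prop

lemma Fn_hasDerivAt (k n : ℕ) (z : ℝ) :
    HasDerivAt (fun x => Fn k n x) (Fn k (n+1) z) z := by
  unfold Fn
  have := intervalIntegral.hasDerivAt_integral_of_dominated_loc_of_deriv_le
    (F := fun (x : ℝ) (ξ : ℝ) => (1 - ξ) ^ n * Real.exp ((1 - ξ) * x) * ξ ^ (k - 1) / ((k-1)! : ℝ))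
    (F' := fun (x : ℝ) (ξ : ℝ) => (1 - ξ) ^ (n+1) * Real.exp ((1 - ξ) * x) * ξ ^ (k - 1) / ((k-1)! : ℝ))
    (x₀ := z) (a := 0) (b := 1) (μ := volume)
    (bound := fun _ => Real.exp (|z| + 1) / ((k-1)! : ℝ)) (s := Metric.ball z 1) (Metric.ball_mem_nhds z one_pos)
    ?_ ?_ ?_ ?_ ?_ ?_
  · exact this.2
  · exact Filter.Eventually.of_forall fun x => (Fn_cont k n x).aestronglyMeasurable
  · exact (Fn_cont k n z).intervalIntegrable 0 1
  · exact (Fn_cont k (n+1) z).aestronglyMeasurable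
  · refine Filter.Eventually.of_forall fun ξ hξ x hx => ?_
    rw [Set.uIoc_of_le (by norm_num : (0:ℝ) ≤ 1)] at hξ
    have h1 : (0:ℝ) ≤ 1 - ξ := by linarith [hξ.2]
    have h2 : 1 - ξ ≤ 1 := by linarith [hξ.1]
    have e3 : |ξ ^ (k-1)| ≤ 1 := by
      rw [abs_pow]
      exact pow_le_one₀ (abs_nonneg _) (abs_le.2 ⟨by linarith [hξ.1], hξ.2⟩)
    have e1 : |(1 - ξ) ^ (n+1)| ≤ 1 := by
      rw [abs_pow]; exact pow_le_one₀ (abs_nonneg _) (abs_le.2 ⟨by linarith, h2⟩)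
    have hxz : |x| ≤ |z| + 1 := by
      have h4 := mem_ball_iff_norm.1 hx
      have h5 := abs_sub_abs_le_abs_sub x z
      simp only [Real.norm_eq_abs] at *
      linarith
    have e2 : |Real.exp ((1 - ξ) * x)| ≤ Real.exp (|z| + 1) := by
      rw [abs_of_pos (Real.exp_pos _)]
      apply Real.exp_le_exp.2
      calc (1 - ξ) * x ≤ |(1 - ξ) * x| := le_abs_self _
        _ = (1 - ξ) * |x| := by rw [abs_mul, abs_of_nonneg h1]
        _ ≤ 1 * (|z| + 1) := mul_le_mul h2 hxz (abs_nonneg _) (by norm_num)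
        _ = |z| + 1 := one_mul _
    rw [Real.norm_eq_abs, abs_div, abs_mul, abs_mul, Nat.abs_cast]
    have key : |(1 - ξ) ^ (n+1)| * |Real.exp ((1 - ξ) * x)| * |ξ ^ (k-1)| ≤ Real.exp (|z| + 1) := by
      have := mul_le_mul (mul_le_mul e1 e2 (abs_nonneg _) zero_le_one)
        e3 (abs_nonneg _) (by positivity)
      simpa using this
    have hfac : (0:ℝ) < ((k-1)! : ℝ) := by positivity
    exact div_le_div_of_nonneg_right' key hfac
  · apply Continuous.intervalIntegrable; fun_prop
  · refine Filter.Eventually.of_forall fun ξ hξ x hx => ?_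
    have h1 : HasDerivAt (fun x : ℝ => (1 - ξ) * x) ((1 - ξ) * 1) x :=
      (hasDerivAt_id x).const_mul (1 - ξ)
    have h2 := h1.exp
    have h3 := ((h2.const_mul ((1 - ξ) ^ n)).mul_const (ξ ^ (k-1))).div_const ((k-1)! : ℝ)
    convert h3 using 1
    · rfl
    ring

lemma Fn_abs_le (k n : ℕ) {z : ℝ} (hz : z ≤ 0) : |Fn k n z| ≤ 1 / ((k-1)! : ℝ) := by
  have h := intervalIntegral.norm_integral_le_of_norm_le_const
    (C := 1 / ((k-1)! : ℝ)) (a := (0:ℝ)) (b := 1)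
    (f := fun ξ : ℝ => (1 - ξ) ^ n * Real.exp ((1 - ξ) * z) * ξ ^ (k - 1) / ((k-1)! : ℝ)) ?_
  · simpa [Fn, Real.norm_eq_abs, abs_div, Nat.abs_cast] using h
  · intro ξ hξ
    rw [Set.uIoc_of_le (by norm_num : (0:ℝ) ≤ 1)] at hξ
    have h1 : (0:ℝ) ≤ 1 - ξ := by linarith [hξ.2]
    have h2 : 1 - ξ ≤ 1 := by linarith [hξ.1]
    have e1 : |(1 - ξ) ^ n| ≤ 1 := by
      rw [abs_pow]; exact pow_le_one₀ (abs_nonneg _) (abs_le.2 ⟨by linarith, h2⟩)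
    have e2 : |Real.exp ((1 - ξ) * z)| ≤ 1 := by
      rw [abs_of_pos (Real.exp_pos _)]
      exact Real.exp_le_one_iff.2 (mul_nonpos_iff.2 (Or.inl ⟨h1, hz⟩))
    have e3 : |ξ ^ (k-1)| ≤ 1 := by
      rw [abs_pow]
      exact pow_le_one₀ (abs_nonneg _) (abs_le.2 ⟨by linarith [hξ.1], hξ.2⟩)
    rw [Real.norm_eq_abs, abs_div, abs_mul, abs_mul, Nat.abs_cast]
    have key : |(1 - ξ) ^ n| * |Real.exp ((1 - ξ) * z)| * |ξ ^ (k-1)| ≤ 1 := by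
      have := mul_le_mul (mul_le_mul e1 e2 (abs_nonneg _) zero_le_one)
        e3 (abs_nonneg _) (by norm_num : (0:ℝ) ≤ 1 * 1)
      simpa using this
    have hfac : (0:ℝ) < ((k-1)! : ℝ) := by positivity
    exact div_le_div_of_nonneg_right' key hfac

lemma Fn_zero (k : ℕ) (hk : 1 ≤ k) : Fn k 0 0 = 1 / (k ! : ℝ) := by
  obtain ⟨m, rfl⟩ := Nat.exists_eq_add_of_le hk
  simp only [Fn, pow_zero, mul_zero, Real.exp_zero, one_mul, mul_one]
  rw [intervalIntegral.integral_div]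
  rw [integral_pow]
  simp [Nat.factorial_succ, Nat.add_comm 1 m]
  ring

lemma key_ineq (k : ℕ) (hk : 1 ≤ k) {x y : ℝ} (hx : x ≤ 0) (hy : y ≤ 0) :
    |Fn k 0 (x + y) - (k ! : ℝ) * Fn k 0 x * Fn k 0 y| ≤
      (1 / ((k-1)! : ℝ) + (k ! : ℝ) * (1 / ((k-1)! : ℝ)) * (1 / ((k-1)! : ℝ))) * |x| * |y| := by
  set c : ℝ := 1 / ((k-1)! : ℝ) with hc
  have hc0 : 0 < c := by positivity
  set M : ℝ := c + (k ! : ℝ) * c * c with hMdef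
  have hM0 : 0 < M := by positivity
  have hfac : (k ! : ℝ) ≠ 0 := by positivity
  have hφ0 : (k ! : ℝ) * Fn k 0 0 = 1 := by
    rw [Fn_zero k hk]; field_simp
  -- Step A: bound on the difference of partial derivatives
  have stepA : ∀ s ∈ Set.Iic (0:ℝ),
      |(Fn k 1 (x + s) - (k ! : ℝ) * Fn k 0 x * Fn k 1 s) -
        (Fn k 1 s - (k ! : ℝ) * Fn k 0 0 * Fn k 1 s)| ≤ M * |x| := by
    intro s hs
    have hd : ∀ u ∈ Set.Iic (0:ℝ),
        HasDerivWithinAt (fun u => Fn k 1 (u + s) - (k ! : ℝ) * Fn k 0 u * Fn k 1 s)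
          (Fn k 2 (u + s) - (k ! : ℝ) * Fn k 1 u * Fn k 1 s) (Set.Iic (0:ℝ)) u := by
      intro u _
      have d1 : HasDerivAt (fun u : ℝ => Fn k 1 (u + s)) (Fn k 2 (u + s)) u := by
        have h := (Fn_hasDerivAt k 1 (u + s)).comp u ((hasDerivAt_id u).add_const s)
        rw [mul_one] at h; exact h
      have d2 : HasDerivAt (fun u : ℝ => (k ! : ℝ) * Fn k 0 u * Fn k 1 s)
          ((k ! : ℝ) * Fn k 1 u * Fn k 1 s) u := by
        simpa [mul_assoc, mul_comm, mul_left_comm] using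
          (((Fn_hasDerivAt k 0 u).const_mul ((k ! : ℝ))).mul_const (Fn k 1 s))
      exact (d1.sub d2).hasDerivWithinAt
    have hbd : ∀ u ∈ Set.Iic (0:ℝ),
        ‖Fn k 2 (u + s) - (k ! : ℝ) * Fn k 1 u * Fn k 1 s‖ ≤ M := by
      intro u hu
      have hus : u + s ≤ 0 := add_nonpos hu (Set.mem_Iic.1 hs)
      have b1 := Fn_abs_le k 2 hus
      have b2 := Fn_abs_le k 1 (Set.mem_Iic.1 hu)
      have b3 := Fn_abs_le k 1 (Set.mem_Iic.1 hs)
      rw [Real.norm_eq_abs]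
      calc |Fn k 2 (u + s) - (k ! : ℝ) * Fn k 1 u * Fn k 1 s|
          ≤ |Fn k 2 (u + s)| + |(k ! : ℝ) * Fn k 1 u * Fn k 1 s| := abs_sub _ _
        _ ≤ c + (k ! : ℝ) * c * c := by
            rw [abs_mul, abs_mul, Nat.abs_cast]
            gcongr
        _ = M := rfl
    have := Convex.norm_image_sub_le_of_norm_hasDerivWithin_le hd hbd (convex_Iic 0)
      (Set.mem_Iic.2 le_rfl) (Set.mem_Iic.2 hx)
    simpa [Real.norm_eq_abs] using this
  -- Step B
  have hd2 : ∀ s ∈ Set.Iic (0:ℝ),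
      HasDerivWithinAt
        (fun s => (Fn k 0 (x + s) - (k ! : ℝ) * Fn k 0 x * Fn k 0 s) -
          (Fn k 0 s - (k ! : ℝ) * Fn k 0 0 * Fn k 0 s))
        ((Fn k 1 (x + s) - (k ! : ℝ) * Fn k 0 x * Fn k 1 s) -
          (Fn k 1 s - (k ! : ℝ) * Fn k 0 0 * Fn k 1 s)) (Set.Iic (0:ℝ)) s := by
    intro s _
    have d1 : HasDerivAt (fun s : ℝ => Fn k 0 (x + s)) (Fn k 1 (x + s)) s := by
      have h := (Fn_hasDerivAt k 0 (x + s)).comp s ((hasDerivAt_id s).const_add x)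
      rw [mul_one] at h; exact h
    have d1' : HasDerivAt (fun s : ℝ => Fn k 0 s) (Fn k 1 s) s := by
      exact Fn_hasDerivAt k 0 s
    have d2 : HasDerivAt (fun s : ℝ => (k ! : ℝ) * Fn k 0 x * Fn k 0 s)
        ((k ! : ℝ) * Fn k 0 x * Fn k 1 s) s :=
      (Fn_hasDerivAt k 0 s).const_mul _
    have d2' : HasDerivAt (fun s : ℝ => (k ! : ℝ) * Fn k 0 0 * Fn k 0 s)
        ((k ! : ℝ) * Fn k 0 0 * Fn k 1 s) s :=
      (Fn_hasDerivAt k 0 s).const_mul _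
    exact ((d1.sub d2).sub (d1'.sub d2')).hasDerivWithinAt
  have hbd2 : ∀ s ∈ Set.Iic (0:ℝ),
      ‖(Fn k 1 (x + s) - (k ! : ℝ) * Fn k 0 x * Fn k 1 s) -
        (Fn k 1 s - (k ! : ℝ) * Fn k 0 0 * Fn k 1 s)‖ ≤ M * |x| := by
    intro s hs
    simpa [Real.norm_eq_abs] using stepA s hs
  have hMVT := Convex.norm_image_sub_le_of_norm_hasDerivWithin_le hd2 hbd2 (convex_Iic 0)
    (Set.mem_Iic.2 le_rfl) (Set.mem_Iic.2 hy)
  -- evaluate at 0 and simplify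
  have hzero : (Fn k 0 (x + 0) - (k ! : ℝ) * Fn k 0 x * Fn k 0 0) -
      (Fn k 0 0 - (k ! : ℝ) * Fn k 0 0 * Fn k 0 0) = 0 := by
    have e1 : (k ! : ℝ) * Fn k 0 x * Fn k 0 0 = Fn k 0 x := by
      rw [mul_comm ((k ! : ℝ)) (Fn k 0 x), mul_assoc, hφ0, mul_one]
    have e2 : (k ! : ℝ) * Fn k 0 0 * Fn k 0 0 = Fn k 0 0 := by
      rw [hφ0, one_mul]
    rw [add_zero, e1, e2]
    ring
  have hgy : Fn k 0 y - (k ! : ℝ) * Fn k 0 0 * Fn k 0 y = 0 := by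
    rw [hφ0, one_mul, sub_self]
  rw [hzero, sub_zero, Real.norm_eq_abs, Real.norm_eq_abs, sub_zero, hgy, sub_zero] at hMVT
  calc |Fn k 0 (x + y) - (k ! : ℝ) * Fn k 0 x * Fn k 0 y| ≤ M * |x| * |y| := hMVT
    _ = (c + (k ! : ℝ) * c * c) * |x| * |y| := rfl

/-- `φ_k(z) = ∫₀¹ e^{(1-ξ)z} ξ^{k-1}/(k-1)! dξ` for `k ≥ 1`. -/
noncomputable def phiR (k : ℕ) (z : ℝ) : ℝ :=
  ∫ ξ in (0:ℝ)..1, Real.exp ((1 - ξ) * z) * ξ ^ (k - 1) / ((k-1)! : ℝ)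

lemma phiR_eq (k : ℕ) (z : ℝ) : phiR k z = Fn k 0 z := by
  simp [phiR, Fn]

theorem phi_splitting_error_bound (k : ℕ) (hk : 1 ≤ k) :
    ∃ C > 0, ∀ a b t : ℝ, a ≤ 0 → b ≤ 0 → 0 < t →
      |phiR k (t * (a + b)) - (k ! : ℝ) * phiR k (t * a) * phiR k (t * b)| ≤
        C * t ^ 2 * |a| * |b| := by
  refine ⟨1 / ((k-1)! : ℝ) + (k ! : ℝ) * (1 / ((k-1)! : ℝ)) * (1 / ((k-1)! : ℝ)),
    by positivity, ?_⟩
  intro a b t ha hb ht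
  have hx : t * a ≤ 0 := mul_nonpos_iff.2 (Or.inl ⟨ht.le, ha⟩)
  have hy : t * b ≤ 0 := mul_nonpos_iff.2 (Or.inl ⟨ht.le, hb⟩)
  have h := key_ineq k hk hx hy
  rw [show t * a + t * b = t * (a + b) by ring] at h
  rw [phiR_eq, phiR_eq, phiR_eq]
  calc |Fn k 0 (t * (a + b)) - (k ! : ℝ) * Fn k 0 (t * a) * Fn k 0 (t * b)|
      ≤ (1 / ((k-1)! : ℝ) + (k ! : ℝ) * (1 / ((k-1)! : ℝ)) * (1 / ((k-1)! : ℝ)))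
        * |t * a| * |t * b| := h
    _ = (1 / ((k-1)! : ℝ) + (k ! : ℝ) * (1 / ((k-1)! : ℝ)) * (1 / ((k-1)! : ℝ)))
        * t ^ 2 * |a| * |b| := by
        rw [abs_mul, abs_mul, abs_of_pos ht]; ring
end

section
/- Scalar φ_k smoothing estimate: for every β ∈ [0,1) and k ≥ 1 there is a constant C such that for all λ ≥ 0 and t ∈ (0,1], one has t^β λ^β φ_k(-tλ) ≤ C, where φ_k(z) = ∫₀¹ e^{(1-ξ)z} ξ^{k-1}/(k-1)! dξ. -/
open scoped Nat

lemma phiR_cont (k : ℕ) (z : ℝ) :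
    Continuous (fun ξ : ℝ => Real.exp ((1 - ξ) * z) * ξ ^ (k - 1) / ((k-1)! : ℝ)) := by
  fun_prop

lemma phiR_nonneg (k : ℕ) (μ : ℝ) : 0 ≤ phiR k (-μ) := by
  apply intervalIntegral.integral_nonneg (by norm_num)
  intro ξ hξ
  have h0 : (0:ℝ) ≤ ξ := hξ.1
  positivity

lemma phiR_le_one (k : ℕ) (μ : ℝ) (hμ : 0 ≤ μ) : phiR k (-μ) ≤ 1 := by
  have h : phiR k (-μ) ≤ ∫ _ in (0:ℝ)..1, (1:ℝ) := by
    apply intervalIntegral.integral_mono_on (by norm_num)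
      ((phiR_cont k (-μ)).intervalIntegrable 0 1) intervalIntegrable_const
    intro ξ hξ
    have h0 : (0:ℝ) ≤ ξ := hξ.1
    have h1 : ξ ≤ 1 := hξ.2
    have he : Real.exp ((1 - ξ) * (-μ)) ≤ 1 := by
      apply Real.exp_le_one_iff.mpr
      have : 0 ≤ (1 - ξ) * μ := mul_nonneg (by linarith) hμ
      nlinarith
    have hp : ξ ^ (k - 1) ≤ 1 := pow_le_one₀ h0 h1
    have hf : (1:ℝ) ≤ ((k-1)! : ℝ) := by exact_mod_cast Nat.one_le_iff_ne_zero.mpr (k-1).factorial_ne_zero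
    have hnum : Real.exp ((1 - ξ) * (-μ)) * ξ ^ (k - 1) ≤ 1 := by
      calc Real.exp ((1 - ξ) * (-μ)) * ξ ^ (k - 1) ≤ 1 * 1 :=
            mul_le_mul he hp (by positivity) zero_le_one
        _ = 1 := by ring
    calc Real.exp ((1 - ξ) * (-μ)) * ξ ^ (k - 1) / ((k-1)! : ℝ)
        ≤ Real.exp ((1 - ξ) * (-μ)) * ξ ^ (k - 1) / 1 :=
          div_le_div_of_nonneg_left (by positivity) one_pos hf
      _ ≤ 1 := by rw [div_one]; exact hnum
  simpa using h

lemma mul_phiR_le_one (k : ℕ) (μ : ℝ) (hμ : 0 ≤ μ) : μ * phiR k (-μ) ≤ 1 := by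
  rcases eq_or_lt_of_le hμ with h0 | h0
  · simp [← h0]
  · have heq : μ * phiR k (-μ)
        = ∫ ξ in (0:ℝ)..1, μ * (Real.exp ((1 - ξ) * (-μ)) * ξ ^ (k - 1) / ((k-1)! : ℝ)) := by
      rw [phiR, ← intervalIntegral.integral_const_mul]
    have hint : (∫ ξ in (0:ℝ)..1, μ * Real.exp ((ξ - 1) * μ)) = 1 - Real.exp (-μ) := by
      have hder : ∀ ξ ∈ Set.uIcc (0:ℝ) 1,
          HasDerivAt (fun x : ℝ => Real.exp ((x - 1) * μ)) (μ * Real.exp ((ξ - 1) * μ)) ξ := by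
        intro ξ _
        have h1 : HasDerivAt (fun x : ℝ => (x - 1) * μ) μ ξ := by
          simpa using ((hasDerivAt_id ξ).sub_const 1).mul_const μ
        simpa [mul_comm] using h1.exp
      have := intervalIntegral.integral_eq_sub_of_hasDerivAt hder
        (by apply Continuous.intervalIntegrable; fun_prop)
      simpa using this
    have hmono : μ * phiR k (-μ) ≤ ∫ ξ in (0:ℝ)..1, μ * Real.exp ((ξ - 1) * μ) := by
      rw [heq]
      apply intervalIntegral.integral_mono_on (by norm_num)
        (by apply Continuous.intervalIntegrable; fun_prop)
        (by apply Continuous.intervalIntegrable; fun_prop)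
      intro ξ hξ
      have hx0 : (0:ℝ) ≤ ξ := hξ.1
      have hx1 : ξ ≤ 1 := hξ.2
      have hp : ξ ^ (k - 1) ≤ 1 := pow_le_one₀ hx0 hx1
      have hf : (1:ℝ) ≤ ((k-1)! : ℝ) := by
        exact_mod_cast Nat.one_le_iff_ne_zero.mpr (k-1).factorial_ne_zero
      have key : Real.exp ((1 - ξ) * (-μ)) * ξ ^ (k - 1) / ((k-1)! : ℝ)
          ≤ Real.exp ((ξ - 1) * μ) := by
        have hrw : (1 - ξ) * (-μ) = (ξ - 1) * μ := by ring
        rw [hrw]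
        calc Real.exp ((ξ - 1) * μ) * ξ ^ (k - 1) / ((k-1)! : ℝ)
            ≤ Real.exp ((ξ - 1) * μ) * 1 / 1 := by
              apply div_le_div₀ (by positivity)
                (mul_le_mul_of_nonneg_left hp (Real.exp_pos _).le) one_pos hf
          _ = Real.exp ((ξ - 1) * μ) := by ring
      exact mul_le_mul_of_nonneg_left key h0.le
    have : μ * phiR k (-μ) ≤ 1 - Real.exp (-μ) := hint ▸ hmono
    have := Real.exp_pos (-μ)
    linarith

theorem scalar_phi_smoothing_estimate (β : ℝ) (hβ0 : 0 ≤ β) (hβ1 : β < 1)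
    (k : ℕ) (hk : 1 ≤ k) :
    ∃ C > 0, ∀ lam t : ℝ, 0 ≤ lam → 0 < t → t ≤ 1 →
      t ^ β * lam ^ β * phiR k (-(t * lam)) ≤ C := by
  refine ⟨2, by norm_num, ?_⟩
  intro lam t hlam ht0 ht1
  set μ := t * lam with hμdef
  have hμ : 0 ≤ μ := mul_nonneg ht0.le hlam
  have hrpow : t ^ β * lam ^ β = μ ^ β := (Real.mul_rpow ht0.le hlam).symm
  rw [hrpow]
  have hφ0 : 0 ≤ phiR k (-μ) := phiR_nonneg k μ
  have hβle : μ ^ β ≤ 1 + μ := by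
    rcases le_or_gt μ 1 with h | h
    · have : μ ^ β ≤ 1 := Real.rpow_le_one hμ h hβ0
      linarith
    · have : μ ^ β ≤ μ ^ (1:ℝ) := Real.rpow_le_rpow_of_exponent_le h.le hβ1.le
      rw [Real.rpow_one] at this
      linarith
  calc μ ^ β * phiR k (-μ) ≤ (1 + μ) * phiR k (-μ) :=
        mul_le_mul_of_nonneg_right hβle hφ0
    _ = phiR k (-μ) + μ * phiR k (-μ) := by ring
    _ ≤ 1 + 1 := add_le_add (phiR_le_one k μ hμ) (mul_phiR_le_one k μ hμ)
    _ = 2 := by norm_num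
end
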